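/- Let (X̃, Y) be a random pair with X̃ ∈ ℝ^d, ‖X̃‖₂ ≤ M almost surely, and suppose that for every x̃ in the support and every t ∈ ℝ, the conditional density p(t | X̃ = x̃) of Y exists and is bounded by a constant K. Fix τ ∈ (0,1) and define g(x̃, y, θ) = (1{y < x̃^T θ} - τ) x̃ and Δ_θ = E[g(X̃, Y, θ) g(X̃, Y, θ)^T]. Then for all θ, θ' ∈ ℝ^d, ‖Δ_θ - Δ_{θ'}‖_F ≤ K M³ ‖θ - θ'‖₂, and E[‖g(X̃,Y,θ) - g(X̃,Y,θ')‖₂²] ≤ K M³ ‖θ - θ'‖₂. -/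

import Mathlib

open MeasureTheory

lemma quantile_key_aux {Ω : Type*} [MeasurableSpace Ω] (μ : Measure Ω) [IsProbabilityMeasure μ]
    {d : ℕ} (X : Ω → EuclideanSpace ℝ (Fin d)) (Y : Ω → ℝ)
    (hX : Measurable X) (hY : Measurable Y)
    (M K : ℝ) (hM : 0 < M) (hK : 0 < K)
    (κ : EuclideanSpace ℝ (Fin d) → Measure ℝ)
    (hdis : ∀ (A : Set (EuclideanSpace ℝ (Fin d))) (B : Set ℝ),
      MeasurableSet A → MeasurableSet B →
      μ {ω | X ω ∈ A ∧ Y ω ∈ B} = ∫⁻ x in A, κ x B ∂(Measure.map X μ))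
    (hdens : ∀ x : EuclideanSpace ℝ (Fin d), ∀ a b : ℝ, a ≤ b →
      κ x (Set.Ioc a b) ≤ ENNReal.ofReal (K * (b - a)))
    (θ θ' : EuclideanSpace ℝ (Fin d)) :
    μ {ω | ‖X ω‖ ≤ M ∧
        min (inner ℝ θ (X ω) : ℝ) (inner ℝ θ' (X ω)) ≤ Y ω ∧
        Y ω < max (inner ℝ θ (X ω) : ℝ) (inner ℝ θ' (X ω))} ≤
      ENNReal.ofReal (K * (M * ‖θ - θ'‖)) := by
  set S : Set Ω := {ω | ‖X ω‖ ≤ M ∧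
      min (inner ℝ θ (X ω) : ℝ) (inner ℝ θ' (X ω)) ≤ Y ω ∧
      Y ω < max (inner ℝ θ (X ω) : ℝ) (inner ℝ θ' (X ω))} with hSdef
  set C : ℝ := ‖θ‖ + ‖θ'‖ + 1 with hC
  have hC0 : 0 < C := by positivity
  apply ENNReal.le_of_forall_pos_le_add
  intro ε hε _
  set δ : ℝ := (ε : ℝ) / (K * (2 * C + 1)) with hδdef
  have hδ : 0 < δ := by
    apply div_pos (by exact_mod_cast hε)
    positivity
  -- countable dense subset of the closed ball
  obtain ⟨T, hTsub, hTcount, hTdense⟩ :=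
    (TopologicalSpace.IsSeparable.of_separableSpace
      (Metric.closedBall (0 : EuclideanSpace ℝ (Fin d)) M)).exists_countable_dense_subset
  have hT'ball : insert (0:EuclideanSpace ℝ (Fin d)) T ⊆
      Metric.closedBall (0 : EuclideanSpace ℝ (Fin d)) M := by
    intro x hx
    rcases hx with rfl | hx
    · simpa using hM.le
    · exact hTsub hx
  obtain ⟨e, he⟩ := ((hTcount.insert 0).exists_eq_range (Set.insert_nonempty _ _))
  have heball : ∀ n, ‖e n‖ ≤ M := by
    intro n
    have : e n ∈ insert (0:EuclideanSpace ℝ (Fin d)) T := by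
      rw [he]; exact Set.mem_range_self n
    simpa [Metric.mem_closedBall, dist_zero_right] using hT'ball this
  have hcover : Metric.closedBall (0 : EuclideanSpace ℝ (Fin d)) M ⊆
      ⋃ n, Metric.ball (e n) δ := by
    intro x hx
    have hx' : x ∈ closure T := hTdense hx
    rcases Metric.mem_closure_iff.1 hx' δ hδ with ⟨z, hzT, hdz⟩
    have : z ∈ insert (0:EuclideanSpace ℝ (Fin d)) T := Set.mem_insert_of_mem _ hzT
    rw [he] at this
    rcases this with ⟨n, rfl⟩
    exact Set.mem_iUnion.2 ⟨n, by simpa [Metric.mem_ball, dist_comm] using hdz⟩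
  -- disjointify the cover
  set P : ℕ → Set (EuclideanSpace ℝ (Fin d)) := disjointed (fun n => Metric.ball (e n) δ)
    with hPdef
  have hPmeas : ∀ n, MeasurableSet (P n) :=
    MeasurableSet.disjointed fun n => Metric.isOpen_ball.measurableSet
  have hPsub : ∀ n, P n ⊆ Metric.ball (e n) δ := fun n => disjointed_subset _ n
  have hPdisj : Pairwise (Function.onFun Disjoint P) := disjoint_disjointed _
  have hPcover : Metric.closedBall (0 : EuclideanSpace ℝ (Fin d)) M ⊆ ⋃ n, P n := by
    rw [hPdef, iUnion_disjointed]; exact hcover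
  -- the intervals
  set lo : ℕ → ℝ := fun n => min (inner ℝ θ (e n) : ℝ) (inner ℝ θ' (e n)) - (C * δ + δ) with hlo
  set hi : ℕ → ℝ := fun n => max (inner ℝ θ (e n) : ℝ) (inner ℝ θ' (e n)) + C * δ with hhi
  have hlh : ∀ n, lo n ≤ hi n := by
    intro n
    have h := min_le_max (a := (inner ℝ θ (e n) : ℝ)) (b := (inner ℝ θ' (e n) : ℝ))
    have h2 : 0 ≤ C * δ := mul_nonneg hC0.le hδ.le
    simp only [hlo, hhi]
    linarith [hδ.le]
  have hlen : ∀ n, hi n - lo n ≤ M * ‖θ - θ'‖ + (2 * C + 1) * δ := by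
    intro n
    have h1 : |(inner ℝ θ (e n) : ℝ) - inner ℝ θ' (e n)| ≤ ‖θ - θ'‖ * M := by
      have : (inner ℝ θ (e n) : ℝ) - inner ℝ θ' (e n) = inner ℝ (θ - θ') (e n) := by
        rw [inner_sub_left]
      rw [this]
      calc |(inner ℝ (θ - θ') (e n) : ℝ)| ≤ ‖θ - θ'‖ * ‖e n‖ := abs_real_inner_le_norm _ _
        _ ≤ ‖θ - θ'‖ * M := by
            exact mul_le_mul_of_nonneg_left (heball n) (norm_nonneg _)
    have h2 : max (inner ℝ θ (e n) : ℝ) (inner ℝ θ' (e n)) -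
        min (inner ℝ θ (e n) : ℝ) (inner ℝ θ' (e n)) =
        |(inner ℝ θ (e n) : ℝ) - inner ℝ θ' (e n)| := by
      rw [max_sub_min_eq_abs, abs_sub_comm]
    simp only [hlo, hhi]
    nlinarith
  -- the rectangles
  have hrect : S ⊆ ⋃ n, {ω | X ω ∈ P n ∧ Y ω ∈ Set.Ioc (lo n) (hi n)} := by
    intro ω hω
    obtain ⟨hXM, hmin, hmax⟩ := hω
    have hXball : X ω ∈ Metric.closedBall (0 : EuclideanSpace ℝ (Fin d)) M := by
      simpa [Metric.mem_closedBall, dist_zero_right] using hXM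
    rcases Set.mem_iUnion.1 (hPcover hXball) with ⟨n, hn⟩
    refine Set.mem_iUnion.2 ⟨n, hn, ?_⟩
    have hne : ‖X ω - e n‖ < δ := by
      have := hPsub n hn
      simpa [Metric.mem_ball, dist_eq_norm] using this
    have hcθ : |(inner ℝ θ (X ω) : ℝ) - inner ℝ θ (e n)| ≤ C * δ := by
      have h1 : (inner ℝ θ (X ω) : ℝ) - inner ℝ θ (e n) = inner ℝ θ (X ω - e n) := by
        rw [inner_sub_right]
      rw [h1]
      calc |(inner ℝ θ (X ω - e n) : ℝ)| ≤ ‖θ‖ * ‖X ω - e n‖ := abs_real_inner_le_norm _ _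
        _ ≤ C * δ := by
            apply mul_le_mul (by rw [hC]; linarith [norm_nonneg θ']) hne.le (norm_nonneg _) hC0.le
    have hcθ' : |(inner ℝ θ' (X ω) : ℝ) - inner ℝ θ' (e n)| ≤ C * δ := by
      have h1 : (inner ℝ θ' (X ω) : ℝ) - inner ℝ θ' (e n) = inner ℝ θ' (X ω - e n) := by
        rw [inner_sub_right]
      rw [h1]
      calc |(inner ℝ θ' (X ω - e n) : ℝ)| ≤ ‖θ'‖ * ‖X ω - e n‖ := abs_real_inner_le_norm _ _
        _ ≤ C * δ := by
            apply mul_le_mul (by rw [hC]; linarith [norm_nonneg θ]) hne.le (norm_nonneg _) hC0.le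
    rw [abs_le] at hcθ hcθ'
    rw [Set.mem_Ioc]
    constructor
    · have h1 : min (inner ℝ θ (e n) : ℝ) (inner ℝ θ' (e n)) - C * δ ≤
          min (inner ℝ θ (X ω) : ℝ) (inner ℝ θ' (X ω)) := by
        apply le_min
        · linarith [min_le_left (inner ℝ θ (e n) : ℝ) (inner ℝ θ' (e n)), hcθ.1]
        · linarith [min_le_right (inner ℝ θ (e n) : ℝ) (inner ℝ θ' (e n)), hcθ'.1]
      simp only [hlo]
      linarith
    · have h2 : max (inner ℝ θ (X ω) : ℝ) (inner ℝ θ' (X ω)) ≤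
          max (inner ℝ θ (e n) : ℝ) (inner ℝ θ' (e n)) + C * δ := by
        apply max_le
        · linarith [le_max_left (inner ℝ θ (e n) : ℝ) (inner ℝ θ' (e n)), hcθ.2]
        · linarith [le_max_right (inner ℝ θ (e n) : ℝ) (inner ℝ θ' (e n)), hcθ'.2]
      simp only [hhi]
      linarith
  -- measure estimate
  have hmap : IsProbabilityMeasure (Measure.map X μ) :=
    Measure.isProbabilityMeasure_map hX.aemeasurable
  have hbound : ∀ n, μ {ω | X ω ∈ P n ∧ Y ω ∈ Set.Ioc (lo n) (hi n)} ≤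
      ENNReal.ofReal (K * (M * ‖θ - θ'‖ + (2 * C + 1) * δ)) * (Measure.map X μ) (P n) := by
    intro n
    rw [hdis (P n) (Set.Ioc (lo n) (hi n)) (hPmeas n) measurableSet_Ioc]
    calc ∫⁻ x in P n, κ x (Set.Ioc (lo n) (hi n)) ∂(Measure.map X μ)
        ≤ ∫⁻ _ in P n, ENNReal.ofReal (K * (M * ‖θ - θ'‖ + (2 * C + 1) * δ))
            ∂(Measure.map X μ) := by
          apply lintegral_mono
          intro x
          refine le_trans (hdens x _ _ (hlh n)) (ENNReal.ofReal_le_ofReal ?_)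
          have := hlen n
          nlinarith [hK.le]
      _ = ENNReal.ofReal (K * (M * ‖θ - θ'‖ + (2 * C + 1) * δ)) * (Measure.map X μ) (P n) := by
          rw [setLIntegral_const]
  calc μ S ≤ μ (⋃ n, {ω | X ω ∈ P n ∧ Y ω ∈ Set.Ioc (lo n) (hi n)}) := measure_mono hrect
    _ ≤ ∑' n, μ {ω | X ω ∈ P n ∧ Y ω ∈ Set.Ioc (lo n) (hi n)} := measure_iUnion_le _
    _ ≤ ∑' n, ENNReal.ofReal (K * (M * ‖θ - θ'‖ + (2 * C + 1) * δ)) * (Measure.map X μ) (P n) :=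
        ENNReal.tsum_le_tsum hbound
    _ = ENNReal.ofReal (K * (M * ‖θ - θ'‖ + (2 * C + 1) * δ)) * ∑' n, (Measure.map X μ) (P n) :=
        ENNReal.tsum_mul_left
    _ ≤ ENNReal.ofReal (K * (M * ‖θ - θ'‖ + (2 * C + 1) * δ)) * 1 := by
        apply mul_le_mul_right
        rw [← measure_iUnion hPdisj hPmeas]
        exact prob_le_one
    _ = ENNReal.ofReal (K * (M * ‖θ - θ'‖) + K * ((2 * C + 1) * δ)) := by
        rw [mul_one]; ring_nf
    _ ≤ ENNReal.ofReal (K * (M * ‖θ - θ'‖)) + ↑ε := by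
        rw [ENNReal.ofReal_add (by positivity) (by positivity)]
        apply add_le_add_right
        have hKδ : K * ((2 * C + 1) * δ) = (ε : ℝ) := by
          rw [hδdef]
          field_simp
        rw [hKδ, ENNReal.ofReal_coe_nnreal]

set_option maxHeartbeats 1000000 in
theorem quantile_score_cov_lipschitz
    {Ω : Type*} [MeasurableSpace Ω] (μ : Measure Ω) [IsProbabilityMeasure μ]
    {d : ℕ} (X : Ω → EuclideanSpace ℝ (Fin d)) (Y : Ω → ℝ)
    (hX : Measurable X) (hY : Measurable Y)
    (M K τ : ℝ) (hM : 0 < M) (hK : 0 < K) (hτ : τ ∈ Set.Ioo (0 : ℝ) 1)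
    (hXbdd : ∀ᵐ ω ∂μ, ‖X ω‖ ≤ M)
    (κ : EuclideanSpace ℝ (Fin d) → Measure ℝ)
    (hdis : ∀ (A : Set (EuclideanSpace ℝ (Fin d))) (B : Set ℝ),
      MeasurableSet A → MeasurableSet B →
      μ {ω | X ω ∈ A ∧ Y ω ∈ B} = ∫⁻ x in A, κ x B ∂(Measure.map X μ))
    (hdens : ∀ x : EuclideanSpace ℝ (Fin d), ∀ a b : ℝ, a ≤ b →
      κ x (Set.Ioc a b) ≤ ENNReal.ofReal (K * (b - a)))
    (g : Ω → EuclideanSpace ℝ (Fin d) → EuclideanSpace ℝ (Fin d))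
    (hg : ∀ ω θ, g ω θ = ((if Y ω < (inner ℝ θ (X ω) : ℝ) then (1 : ℝ) else 0) - τ) • X ω)
    (Δ : EuclideanSpace ℝ (Fin d) → Matrix (Fin d) (Fin d) ℝ)
    (hΔ : ∀ θ i j, Δ θ i j = ∫ ω, g ω θ i * g ω θ j ∂μ) :
    ∀ θ θ' : EuclideanSpace ℝ (Fin d),
      Real.sqrt (∑ i, ∑ j, (Δ θ i j - Δ θ' i j) ^ 2) ≤ K * M ^ 3 * ‖θ - θ'‖ ∧
        ∫ ω, ‖g ω θ - g ω θ'‖ ^ 2 ∂μ ≤ K * M ^ 3 * ‖θ - θ'‖ := by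
  intro θ θ'
  set s1 : Ω → ℝ := fun ω => if Y ω < (inner ℝ θ (X ω) : ℝ) then (1:ℝ) else 0 with hs1
  set s2 : Ω → ℝ := fun ω => if Y ω < (inner ℝ θ' (X ω) : ℝ) then (1:ℝ) else 0 with hs2
  set S : Set Ω := {ω | ‖X ω‖ ≤ M ∧
      min (inner ℝ θ (X ω) : ℝ) (inner ℝ θ' (X ω)) ≤ Y ω ∧
      Y ω < max (inner ℝ θ (X ω) : ℝ) (inner ℝ θ' (X ω))} with hSdef
  have hS : μ S ≤ ENNReal.ofReal (K * (M * ‖θ - θ'‖)) :=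
    quantile_key_aux μ X Y hX hY M K hM hK κ hdis hdens θ θ'
  have hStoReal : (μ S).toReal ≤ K * (M * ‖θ - θ'‖) :=
    ENNReal.toReal_le_of_le_ofReal (by positivity) hS
  have hA : Measurable fun ω => (inner ℝ θ (X ω) : ℝ) := measurable_const.inner hX
  have hB : Measurable fun ω => (inner ℝ θ' (X ω) : ℝ) := measurable_const.inner hX
  have hSmeas : MeasurableSet S := by
    refine MeasurableSet.inter (measurableSet_le hX.norm measurable_const) ?_
    exact MeasurableSet.inter (measurableSet_le (hA.min hB) hY)
      (measurableSet_lt hY (hA.max hB))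
  have hs1meas : Measurable s1 := Measurable.ite (measurableSet_lt hY hA)
    measurable_const measurable_const
  have hs2meas : Measurable s2 := Measurable.ite (measurableSet_lt hY hB)
    measurable_const measurable_const
  -- membership
  have hmem : ∀ ω, ‖X ω‖ ≤ M → s1 ω ≠ s2 ω → ω ∈ S := by
    intro ω hMω hne
    by_cases h1 : Y ω < (inner ℝ θ (X ω) : ℝ) <;>
      by_cases h2 : Y ω < (inner ℝ θ' (X ω) : ℝ)
    · exact absurd (by simp only [hs1, hs2]; rw [if_pos h1, if_pos h2]) hne
    · exact ⟨hMω, le_trans (min_le_right _ _) (not_lt.1 h2),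
        lt_of_lt_of_le h1 (le_max_left _ _)⟩
    · exact ⟨hMω, le_trans (min_le_left _ _) (not_lt.1 h1),
        lt_of_lt_of_le h2 (le_max_right _ _)⟩
    · exact absurd (by simp only [hs1, hs2]; rw [if_neg h1, if_neg h2]) hne
  have hs01 : ∀ ω, (s1 ω = 0 ∨ s1 ω = 1) ∧ (s2 ω = 0 ∨ s2 ω = 1) := by
    intro ω
    constructor
    · by_cases h : Y ω < (inner ℝ θ (X ω) : ℝ)
      · right; simp only [hs1]; rw [if_pos h]
      · left; simp only [hs1]; rw [if_neg h]
    · by_cases h : Y ω < (inner ℝ θ' (X ω) : ℝ)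
      · right; simp only [hs2]; rw [if_pos h]
      · left; simp only [hs2]; rw [if_neg h]
  have hind : ∀ ω, ‖X ω‖ ≤ M → |s1 ω - s2 ω| ≤ S.indicator (fun _ => (1:ℝ)) ω := by
    intro ω hMω
    by_cases hne : s1 ω = s2 ω
    · rw [hne, sub_self, abs_zero]
      exact Set.indicator_nonneg (by intro _ _; norm_num) ω
    · rw [Set.indicator_of_mem (hmem ω hMω hne)]
      rcases (hs01 ω).1 with h1 | h1 <;> rcases (hs01 ω).2 with h2 | h2 <;>
        rw [h1, h2] <;> norm_num
  have habs1 : |1 - 2*τ| ≤ 1 := by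
    rw [abs_le]; constructor <;> linarith [hτ.1, hτ.2]
  have habs : ∀ ω, |(s1 ω - τ)^2 - (s2 ω - τ)^2| ≤ |s1 ω - s2 ω| := by
    intro ω
    rcases (hs01 ω).1 with h1 | h1 <;> rcases (hs01 ω).2 with h2 | h2 <;> rw [h1, h2]
    · simp
    · calc |((0:ℝ) - τ)^2 - (1 - τ)^2| = |1 - 2*τ| := by
            rw [show ((0:ℝ) - τ)^2 - (1 - τ)^2 = -(1 - 2*τ) from by ring, abs_neg]
        _ ≤ 1 := habs1
        _ = |(0:ℝ) - 1| := by norm_num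
    · calc |((1:ℝ) - τ)^2 - (0 - τ)^2| = |1 - 2*τ| := by
            rw [show ((1:ℝ) - τ)^2 - (0 - τ)^2 = 1 - 2*τ from by ring]
        _ ≤ 1 := habs1
        _ = |(1:ℝ) - 0| := by norm_num
    · simp
  -- Part 2
  have hgdiff : ∀ ω, g ω θ - g ω θ' = (s1 ω - s2 ω) • X ω := by
    intro ω
    rw [hg, hg, ← sub_smul]
    congr 1
    simp [hs1, hs2]
  have hnorm2 : ∀ ω, ‖g ω θ - g ω θ'‖^2 = (s1 ω - s2 ω)^2 * ‖X ω‖^2 := by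
    intro ω
    rw [hgdiff, norm_smul, mul_pow, Real.norm_eq_abs, sq_abs]
  have hindInt : Integrable (S.indicator fun _ => M^2) μ :=
    (integrable_const (M^2)).indicator hSmeas
  have haebound : ∀ᵐ ω ∂μ, ‖g ω θ - g ω θ'‖^2 ≤ S.indicator (fun _ => M^2) ω := by
    filter_upwards [hXbdd] with ω hMω
    rw [hnorm2]
    have h1 := hind ω hMω
    by_cases hmem' : ω ∈ S
    · rw [Set.indicator_of_mem hmem']
      rw [Set.indicator_of_mem hmem'] at h1
      have h2 : (s1 ω - s2 ω)^2 ≤ 1 := by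
        rw [← sq_abs]; nlinarith [abs_nonneg (s1 ω - s2 ω)]
      nlinarith [norm_nonneg (X ω), sq_nonneg (s1 ω - s2 ω)]
    · rw [Set.indicator_of_notMem hmem'] at h1 ⊢
      have h2 : s1 ω = s2 ω := by
        by_contra hne
        exact hmem' (hmem ω hMω hne)
      rw [h2, sub_self]
      simp
  have hgfun : (fun ω => ‖g ω θ - g ω θ'‖^2) = fun ω => (s1 ω - s2 ω)^2 * ‖X ω‖^2 :=
    funext hnorm2
  have hfint : Integrable (fun ω => ‖g ω θ - g ω θ'‖^2) μ := by
    rw [hgfun]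
    apply Integrable.mono' hindInt
      (((hs1meas.sub hs2meas).pow_const 2).mul (hX.norm.pow_const 2)).aestronglyMeasurable
    filter_upwards [haebound] with ω hω
    rw [Real.norm_eq_abs, abs_of_nonneg (mul_nonneg (sq_nonneg _) (sq_nonneg _))]
    exact le_trans (le_of_eq (hnorm2 ω).symm) hω
  have hintind : ∫ ω, S.indicator (fun _ => M^2) ω ∂μ = (μ S).toReal * M^2 := by
    rw [integral_indicator_const _ hSmeas]
    simp [smul_eq_mul, Measure.real]
  have part2 : ∫ ω, ‖g ω θ - g ω θ'‖ ^ 2 ∂μ ≤ K * M ^ 3 * ‖θ - θ'‖ := by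
    calc ∫ ω, ‖g ω θ - g ω θ'‖ ^ 2 ∂μ ≤ ∫ ω, S.indicator (fun _ => M^2) ω ∂μ :=
          integral_mono_ae hfint hindInt haebound
      _ = (μ S).toReal * M^2 := hintind
      _ ≤ (K * (M * ‖θ - θ'‖)) * M^2 := by
          nlinarith [ENNReal.toReal_nonneg (a := μ S), sq_nonneg M]
      _ = K * M ^ 3 * ‖θ - θ'‖ := by ring
  refine ⟨?_, part2⟩
  -- Part 1
  set W : Ω → (Fin d × Fin d → ℝ) := fun ω p =>
    g ω θ p.1 * g ω θ p.2 - g ω θ' p.1 * g ω θ' p.2 with hW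
  set V : Ω → EuclideanSpace ℝ (Fin d × Fin d) :=
    fun ω => (WithLp.equiv 2 _).symm (W ω) with hV
  have hVapp : ∀ ω p, V ω p = ((s1 ω - τ)^2 - (s2 ω - τ)^2) * (X ω p.1 * X ω p.2) := by
    intro ω p
    show W ω p = _
    rw [hW]
    simp only [hg, PiLp.smul_apply, smul_eq_mul, hs1, hs2]
    ring
  have hXsum : ∀ ω, ∑ i, X ω i ^ 2 = ‖X ω‖^2 := by
    intro ω
    rw [EuclideanSpace.norm_eq, Real.sq_sqrt (by positivity)]
    congr 1
    funext i
    rw [Real.norm_eq_abs, sq_abs]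
  have hVnorm : ∀ ω, ‖V ω‖ = |(s1 ω - τ)^2 - (s2 ω - τ)^2| * ‖X ω‖^2 := by
    intro ω
    rw [EuclideanSpace.norm_eq]
    have h1 : ∑ p : Fin d × Fin d, ‖V ω p‖^2 =
        ((s1 ω - τ)^2 - (s2 ω - τ)^2)^2 * (‖X ω‖^2 * ‖X ω‖^2) := by
      rw [Fintype.sum_prod_type]
      have : ∀ i j, ‖V ω (i,j)‖^2 =
          ((s1 ω - τ)^2 - (s2 ω - τ)^2)^2 * (X ω i ^2 * X ω j ^2) := by
        intro i j
        rw [hVapp, Real.norm_eq_abs, sq_abs]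
        ring
      simp only [this]
      rw [← hXsum ω, Finset.sum_mul_sum]
      simp only [Finset.mul_sum]
      all_goals exact Finset.sum_congr rfl fun i _ => Finset.sum_congr rfl fun j _ => by ring
    rw [h1]
    rw [show ((s1 ω - τ)^2 - (s2 ω - τ)^2)^2 * (‖X ω‖^2 * ‖X ω‖^2) =
        (|(s1 ω - τ)^2 - (s2 ω - τ)^2| * ‖X ω‖^2)^2 by rw [← sq_abs]; ring]
    exact Real.sqrt_sq (by positivity)
  have hVaebound : ∀ᵐ ω ∂μ, ‖V ω‖ ≤ S.indicator (fun _ => M^2) ω := by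
    filter_upwards [hXbdd] with ω hMω
    rw [hVnorm]
    have h1 := le_trans (habs ω) (hind ω hMω)
    by_cases hmem' : ω ∈ S
    · rw [Set.indicator_of_mem hmem'] at h1 ⊢
      nlinarith [norm_nonneg (X ω), abs_nonneg ((s1 ω - τ)^2 - (s2 ω - τ)^2)]
    · rw [Set.indicator_of_notMem hmem'] at h1 ⊢
      nlinarith [abs_nonneg ((s1 ω - τ)^2 - (s2 ω - τ)^2), norm_nonneg (X ω),
        sq_nonneg (‖X ω‖)]
  have hWmeas : Measurable W := by
    apply measurable_pi_lambda
    intro p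
    have hgc : ∀ (ν : EuclideanSpace ℝ (Fin d)) (i : Fin d),
        Measurable fun ω => g ω ν i := by
      intro ν i
      have : (fun ω => g ω ν i) = fun ω =>
          ((if Y ω < (inner ℝ ν (X ω) : ℝ) then (1:ℝ) else 0) - τ) * X ω i := by
        funext ω
        rw [hg]
        simp [PiLp.smul_apply, smul_eq_mul]
      rw [this]
      exact ((Measurable.ite (measurableSet_lt hY (measurable_const.inner hX))
        measurable_const measurable_const).sub measurable_const).mul
        ((measurable_pi_apply i).comp ((WithLp.measurable_ofLp 2 _).comp hX))
    exact ((hgc θ p.1).mul (hgc θ p.2)).sub ((hgc θ' p.1).mul (hgc θ' p.2))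
  have hVmeas : AEStronglyMeasurable V μ := by
    have : Measurable V := by
      rw [hV]
      exact (PiLp.continuous_toLp 2 fun _ : Fin d × Fin d => ℝ).measurable.comp hWmeas
    exact this.aestronglyMeasurable
  have hVint : Integrable V μ := by
    apply Integrable.mono' hindInt hVmeas
    filter_upwards [hVaebound] with ω hω
    exact hω
  -- component-wise integral
  have hterm_int : ∀ (ν : EuclideanSpace ℝ (Fin d)) (i j : Fin d),
      Integrable (fun ω => g ω ν i * g ω ν j) μ := by
    intro ν i j
    have hgc : Measurable fun ω => g ω ν i * g ω ν j := by
      have h0 : ∀ k : Fin d, Measurable fun ω => g ω ν k := by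
        intro k
        have : (fun ω => g ω ν k) = fun ω =>
            ((if Y ω < (inner ℝ ν (X ω) : ℝ) then (1:ℝ) else 0) - τ) * X ω k := by
          funext ω
          rw [hg]
          simp [PiLp.smul_apply, smul_eq_mul]
        rw [this]
        exact ((Measurable.ite (measurableSet_lt hY (measurable_const.inner hX))
          measurable_const measurable_const).sub measurable_const).mul
          ((measurable_pi_apply k).comp ((WithLp.measurable_ofLp 2 _).comp hX))
      exact (h0 i).mul (h0 j)
    apply Integrable.mono' (integrable_const ((1 + |τ|) * M * ((1 + |τ|) * M)))
      hgc.aestronglyMeasurable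
    filter_upwards [hXbdd] with ω hMω
    have hXk : ∀ k : Fin d, |X ω k| ≤ M := by
      intro k
      have h2 : (X ω k)^2 ≤ ‖X ω‖^2 := by
        rw [← hXsum ω]
        exact Finset.single_le_sum (f := fun i => X ω i ^ 2)
          (fun i _ => sq_nonneg _) (Finset.mem_univ k)
      have h3 : |X ω k| ≤ ‖X ω‖ := by
        rw [← Real.sqrt_sq_eq_abs, ← Real.sqrt_sq (norm_nonneg (X ω))]
        exact Real.sqrt_le_sqrt h2
      linarith
    have hcomp : ∀ k : Fin d, |g ω ν k| ≤ (1 + |τ|) * M := by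
      intro k
      rw [hg, PiLp.smul_apply, smul_eq_mul, abs_mul]
      have h1 : |(if Y ω < (inner ℝ ν (X ω) : ℝ) then (1:ℝ) else 0) - τ| ≤ 1 + |τ| := by
        split <;>
          calc |_ - τ| ≤ |_| + |τ| := abs_sub _ _
            _ ≤ 1 + |τ| := by norm_num
      exact mul_le_mul h1 (hXk k) (abs_nonneg _) (by positivity)
    rw [Real.norm_eq_abs, abs_mul]
    exact mul_le_mul (hcomp i) (hcomp j) (abs_nonneg _) (by positivity)
  have hDij : ∀ i j, Δ θ i j - Δ θ' i j = ∫ ω, V ω (i, j) ∂μ := by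
    intro i j
    rw [hΔ, hΔ, ← integral_sub (hterm_int θ i j) (hterm_int θ' i j)]
    rfl
  have hproj : ∀ p : Fin d × Fin d, (∫ ω, V ω ∂μ) p = ∫ ω, V ω p ∂μ := by
    intro p
    have h := (EuclideanSpace.proj p (𝕜 := ℝ)).integral_comp_comm hVint
    simpa using h.symm
  have hsum : ∑ i, ∑ j, (Δ θ i j - Δ θ' i j)^2 =
      ∑ p : Fin d × Fin d, ‖(∫ ω, V ω ∂μ) p‖^2 := by
    rw [Fintype.sum_prod_type]
    refine Finset.sum_congr rfl fun i _ => Finset.sum_congr rfl fun j _ => ?_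
    rw [hproj (i, j), ← hDij i j, Real.norm_eq_abs, sq_abs]
  rw [hsum, ← EuclideanSpace.norm_eq]
  calc ‖∫ ω, V ω ∂μ‖ ≤ ∫ ω, ‖V ω‖ ∂μ := norm_integral_le_integral_norm _
    _ ≤ ∫ ω, S.indicator (fun _ => M^2) ω ∂μ := integral_mono_ae hVint.norm hindInt hVaebound
    _ = (μ S).toReal * M^2 := hintind
    _ ≤ (K * (M * ‖θ - θ'‖)) * M^2 := by
        nlinarith [ENNReal.toReal_nonneg (a := μ S), sq_nonneg M]
    _ = K * M ^ 3 * ‖θ - θ'‖ := by ring
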